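/- Let θ, η ∈ ℝ^d be unit vectors, let ρ ≥ 0, s > 0, and δ ∈ (0,1], and suppose |⟨θ, η⟩| ≤ 1 − δ. Then the quantity q = ⟨θ, η⟩ sinh(s) sinh(ρ) + cosh(s) cosh(ρ) (the hyperbolic-cosine coordinate of the point obtained by applying the line development matrix M(s,θ) to the hyperboloid point (η sinh ρ, cosh ρ)) satisfies (δ/2) cosh(ρ + s) ≤ q ≤ cosh(ρ + s). -/

import Mathlib

open Real Set

/-- Let `θ, η ∈ ℝ^d` be unit vectors, `ρ ≥ 0`, `s > 0`, `δ ∈ (0,1]`, and suppose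
`|⟨θ, η⟩| ≤ 1 − δ`.  Then the hyperbolic-cosine coordinate
`q = ⟨θ,η⟩ sinh(s) sinh(ρ) + cosh(s) cosh(ρ)` of the image of the hyperboloid point
`(η sinh ρ, cosh ρ)` under the line development matrix `M(s,θ)` satisfies
`(δ/2) cosh(ρ + s) ≤ q ≤ cosh(ρ + s)`. -/
theorem cosh_coordinate_bounds
    {d : ℕ} (θ η : EuclideanSpace ℝ (Fin d)) (hθ : ‖θ‖ = 1) (hη : ‖η‖ = 1)
    (ρ s δ : ℝ) (hρ : 0 ≤ ρ) (hs : 0 < s) (hδ : δ ∈ Ioc (0 : ℝ) 1)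
    (hip : |(inner ℝ θ η : ℝ)| ≤ 1 - δ) :
    δ / 2 * Real.cosh (ρ + s) ≤
        (inner ℝ θ η : ℝ) * Real.sinh s * Real.sinh ρ + Real.cosh s * Real.cosh ρ ∧
      (inner ℝ θ η : ℝ) * Real.sinh s * Real.sinh ρ + Real.cosh s * Real.cosh ρ ≤
        Real.cosh (ρ + s) := by
  obtain ⟨hδ0, hδ1⟩ := hδ
  obtain ⟨h1, h2⟩ := abs_le.mp hip
  have hsρ : 0 ≤ Real.sinh ρ := Real.sinh_nonneg_iff.mpr hρ
  have hss : 0 ≤ Real.sinh s := Real.sinh_nonneg_iff.mpr hs.le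
  have hcρ : Real.sinh ρ ≤ Real.cosh ρ := (Real.sinh_lt_cosh ρ).le
  have hcs : Real.sinh s ≤ Real.cosh s := (Real.sinh_lt_cosh s).le
  have hcρ1 : 1 ≤ Real.cosh ρ := Real.one_le_cosh ρ
  have hcs1 : 1 ≤ Real.cosh s := Real.one_le_cosh s
  rw [Real.cosh_add]
  constructor <;> nlinarith [mul_nonneg hss hsρ,
    mul_le_mul hcs hcρ hsρ (by linarith : (0:ℝ) ≤ Real.cosh s)]
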